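/- Let K and M be closed subspaces of a complex Hilbert space E. Then the orthogonal projections P_K and P_M commute if and only if com(K, M) = ⊤ (the whole space E). -/

import Mathlib

variable {E : Type*} [NormedAddCommGroup E] [InnerProductSpace ℂ E] [CompleteSpace E]

/-- Orthogonal projection onto (the topological closure of) a submodule, as a
continuous linear operator on `E`. For a closed subspace `K` this is the
orthogonal projection `P_K` onto `K` itself. -/
noncomputable def proj (K : Submodule ℂ E) : E →L[ℂ] E :=
  K.topologicalClosure.subtypeL.comp (Submodule.orthogonalProjectionOnto K.topologicalClosure)


/-- The commutator `com(K, M)` of two subspaces. -/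
noncomputable def com (K M : Submodule ℂ E) : Submodule ℂ E :=
  (K ⊓ M) ⊔ (K ⊓ Mᗮ) ⊔ (Kᗮ ⊓ M) ⊔ (Kᗮ ⊓ Mᗮ)

lemma proj_apply_mem (K : Submodule ℂ E) (hK : IsClosed (K : Set E)) (x : E) : proj K x ∈ K := by
  have h : K.topologicalClosure = K := IsClosed.submodule_topologicalClosure_eq hK
  have := (Submodule.orthogonalProjectionOnto K.topologicalClosure x).2
  simp only [h] at this
  exact this

lemma proj_eq_self (K : Submodule ℂ E) {x : E} (hx : x ∈ K) : proj K x = x :=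
  congrArg Subtype.val
    (Submodule.orthogonalProjectionOnto_mem_subspace_eq_self (⟨x, K.le_topologicalClosure hx⟩ :
      K.topologicalClosure))

lemma proj_eq_zero (K : Submodule ℂ E) {x : E} (hx : x ∈ Kᗮ) : proj K x = 0 := by
  have hx' : x ∈ K.topologicalClosureᗮ := by
    rw [← K.orthogonal_orthogonal_eq_closure]; exact Kᗮ.le_orthogonal_orthogonal hx
  exact congrArg Subtype.val
    (Submodule.orthogonalProjectionOnto_apply_of_mem_orthogonal hx')

lemma sub_proj_mem (K : Submodule ℂ E) (hK : IsClosed (K : Set E)) (x : E) :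
    x - proj K x ∈ Kᗮ := by
  have h : K.topologicalClosure = K := IsClosed.submodule_topologicalClosure_eq hK
  have : x - proj K x ∈ K.topologicalClosureᗮ :=
    Submodule.sub_starProjection_mem_orthogonal (K := K.topologicalClosure) x
  simp only [h] at this
  exact this

theorem stmt2 (K M : Submodule ℂ E) (hK : IsClosed (K : Set E)) (hM : IsClosed (M : Set E)) :
    proj K ∘L proj M = proj M ∘L proj K ↔ com K M = ⊤ := by
  constructor
  · intro hcomm
    have hc : ∀ y, proj K (proj M y) = proj M (proj K y) := fun y => by
      have := DFunLike.congr_fun hcomm y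
      simpa using this
    rw [Submodule.eq_top_iff']
    intro x
    have ha : proj K (proj M x) ∈ K ⊓ M := by
      refine ⟨proj_apply_mem K hK _, ?_⟩
      rw [hc]; exact proj_apply_mem M hM _
    have hb : proj K x - proj K (proj M x) ∈ K ⊓ Mᗮ := by
      constructor
      · exact sub_mem (proj_apply_mem K hK x) (proj_apply_mem K hK _)
      · rw [hc]
        exact sub_proj_mem M hM (proj K x)
    have hcc : proj M x - proj K (proj M x) ∈ Kᗮ ⊓ M := by
      constructor
      · exact sub_proj_mem K hK (proj M x)
      · rw [hc]
        exact sub_mem (proj_apply_mem M hM x) (proj_apply_mem M hM _)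
    have hd : x - proj K x - proj M x + proj K (proj M x) ∈ Kᗮ ⊓ Mᗮ := by
      constructor
      · have : x - proj K x - proj M x + proj K (proj M x)
            = (x - proj M x) - proj K (x - proj M x) := by
          rw [map_sub]; abel
        rw [this]
        exact sub_proj_mem K hK _
      · have : x - proj K x - proj M x + proj K (proj M x)
            = (x - proj K x) - proj M (x - proj K x) := by
          rw [map_sub, hc]; abel
        rw [this]
        exact sub_proj_mem M hM _
    have hx : x = proj K (proj M x) + (proj K x - proj K (proj M x))
        + (proj M x - proj K (proj M x)) + (x - proj K x - proj M x + proj K (proj M x)) := by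
      abel
    rw [hx]
    exact Submodule.add_mem_sup (Submodule.add_mem_sup (Submodule.add_mem_sup ha hb) hcc) hd
  · intro h
    ext x
    have hx : x ∈ com K M := h ▸ Submodule.mem_top
    rcases Submodule.mem_sup.mp hx with ⟨y, hy, d, hd, rfl⟩
    rcases Submodule.mem_sup.mp hy with ⟨z, hz, c, hc, rfl⟩
    rcases Submodule.mem_sup.mp hz with ⟨a, ha, b, hb, rfl⟩
    simp only [ContinuousLinearMap.comp_apply, map_add]
    rw [proj_eq_self M ha.2, proj_eq_zero M hb.2, proj_eq_self M hc.2, proj_eq_zero M hd.2,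
      proj_eq_self K ha.1, proj_eq_self M ha.2,
      proj_eq_self K hb.1, proj_eq_zero M hb.2,
      proj_eq_zero K hc.1, proj_eq_zero K hd.1]
    simp [proj_eq_self K ha.1, proj_eq_zero K hc.1]
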